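/- arXiv:1212.2839 — 8 statements merged into one kernel-verified Lean document; each statement's English description precedes it below -/
import Mathlib

section
/- For U = R S + L S† + M a unitary operator on ℓ²(ℤ) ⊗ ℂ^Λ, where S is the shift operator and R, L, M are Λ×Λ matrices, unitarity of U is equivalent to the conditions R R† + L L† + M M† = I, M R† + L M† = 0, and L R† = 0. -/
open Matrix

open Complex


lemma qca_solve5 {V : Type*} [AddCommGroup V] [Module ℂ V] (a b b' c c' o : V) (u v : ℂ)
    (E1 : a + (1:ℂ) • b + (1:ℂ) • b' + (1:ℂ) • c + (1:ℂ) • c' = o)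
    (E2 : a + (-1:ℂ) • b + (-1:ℂ) • b' + (1:ℂ) • c + (1:ℂ) • c' = o)
    (E3 : a + (-I) • b + I • b' + (-1:ℂ) • c + (-1:ℂ) • c' = o)
    (E4 : a + I • b + (-I) • b' + (-1:ℂ) • c + (-1:ℂ) • c' = o)
    (E5 : a + u • b + v • b' + (-I) • c + I • c' = o) :
    a = o ∧ b = 0 ∧ c = 0 := by
  have two_ne : (2:ℂ) ≠ 0 := by norm_num
  -- b + b' = 0
  have s1 : (2:ℂ) • (b + b') = 0 := by
    have h : (2:ℂ) • (b + b') =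
        (a + (1:ℂ) • b + (1:ℂ) • b' + (1:ℂ) • c + (1:ℂ) • c')
        - (a + (-1:ℂ) • b + (-1:ℂ) • b' + (1:ℂ) • c + (1:ℂ) • c') := by module
    rw [E1, E2, sub_self] at h; exact h
  have bb' : b + b' = 0 := by
    rcases smul_eq_zero.mp s1 with h | h
    · exact absurd h two_ne
    · exact h
  -- b' = b
  have s2 : ((2:ℂ) * I) • (b' - b) = 0 := by
    have h : ((2:ℂ) * I) • (b' - b) =
        (a + (-I) • b + I • b' + (-1:ℂ) • c + (-1:ℂ) • c')
        - (a + I • b + (-I) • b' + (-1:ℂ) • c + (-1:ℂ) • c') := by module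
    rw [E3, E4, sub_self] at h; exact h
  have b'b : b' = b := by
    rcases smul_eq_zero.mp s2 with h | h
    · exact absurd h (by simp [I_ne_zero])
    · exact sub_eq_zero.mp h
  have hb : b = 0 := by
    have : (2:ℂ) • b = 0 := by
      rw [b'b] at bb'
      have h : (2:ℂ) • b = b + b := by module
      rw [h, bb']
    rcases smul_eq_zero.mp this with h | h
    · exact absurd h two_ne
    · exact h
  have hb' : b' = 0 := b'b.trans hb
  -- a = o and c + c' = 0
  have s3 : (2:ℂ) • (a + c + c') = o + o := by
    have h : (2:ℂ) • (a + c + c') =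
        (a + (1:ℂ) • b + (1:ℂ) • b' + (1:ℂ) • c + (1:ℂ) • c')
        + (a + (-1:ℂ) • b + (-1:ℂ) • b' + (1:ℂ) • c + (1:ℂ) • c') := by module
    rw [E1, E2] at h; exact h
  have s4 : (2:ℂ) • (a - c - c') = o + o := by
    have h : (2:ℂ) • (a - c - c') =
        (a + (-I) • b + I • b' + (-1:ℂ) • c + (-1:ℂ) • c')
        + (a + I • b + (-I) • b' + (-1:ℂ) • c + (-1:ℂ) • c') := by module
    rw [E3, E4] at h; exact h
  have ha : a = o := by
    have h4 : (4:ℂ) • a = (4:ℂ) • o := by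
      have h : (4:ℂ) • a = (2:ℂ) • (a + c + c') + (2:ℂ) • (a - c - c') := by module
      rw [h, s3, s4]; module
    exact smul_right_injective V (by norm_num : (4:ℂ) ≠ 0) h4
  have hcc : c + c' = 0 := by
    have h : (4:ℂ) • (c + c') = (2:ℂ) • (a + c + c') - (2:ℂ) • (a - c - c') := by module
    rw [s3, s4, sub_self] at h
    rcases smul_eq_zero.mp h with h | h
    · exact absurd h (by norm_num)
    · exact h
  -- c = 0 from E5
  have s5 : (-I) • c + I • c' = 0 := by
    have h : (-I) • c + I • c' =
        (a + u • b + v • b' + (-I) • c + I • c') - a := by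
      rw [hb, hb']; module
    rw [E5, ha, sub_self] at h; exact h
  have hc : c = 0 := by
    have hc' : c' = -c := eq_neg_of_add_eq_zero_right hcc
    rw [hc'] at s5
    have h : ((-2:ℂ) * I) • c = (-I) • c + I • (-c) := by module
    rw [s5] at h
    rcases smul_eq_zero.mp h with h | h
    · exact absurd h (by simp [I_ne_zero])
    · exact h
  exact ⟨ha, hb, hc⟩


lemma qca_expand {n : ℕ} (R L M : Matrix (Fin n) (Fin n) ℂ) (z : ℂ) :
    ((z • R + M + star z • L))ᴴ * (z • R + M + star z • L) =
      (z * star z) • (Rᴴ * R) + (star z * z) • (Lᴴ * L) + Mᴴ * M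
      + star z • (Rᴴ * M + Mᴴ * L) + z • (Mᴴ * R + Lᴴ * M)
      + (star z * star z) • (Rᴴ * L) + (z * z) • (Lᴴ * R) := by
  simp only [conjTranspose_add, conjTranspose_smul, star_star, Matrix.add_mul, Matrix.mul_add,
    Matrix.smul_mul, Matrix.mul_smul, smul_smul, smul_add]
  module

lemma qca_expand' {n : ℕ} (R L M : Matrix (Fin n) (Fin n) ℂ) (z : ℂ) :
    (z • R + M + star z • L) * ((z • R + M + star z • L))ᴴ =
      (z * star z) • (R * Rᴴ) + (star z * z) • (L * Lᴴ) + M * Mᴴ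
      + z • (R * Mᴴ + M * Lᴴ) + star z • (M * Rᴴ + L * Mᴴ)
      + (z * z) • (R * Lᴴ) + (star z * star z) • (L * Rᴴ) := by
  simp only [conjTranspose_add, conjTranspose_smul, star_star, Matrix.add_mul, Matrix.mul_add,
    Matrix.smul_mul, Matrix.mul_smul, smul_smul, smul_add]
  module

lemma qca_dual {n : ℕ} (R L M : Matrix (Fin n) (Fin n) ℂ)
    (h1 : R * Rᴴ + L * Lᴴ + M * Mᴴ = 1) (h2 : M * Rᴴ + L * Mᴴ = 0) (h3 : L * Rᴴ = 0) :
    Rᴴ * R + Lᴴ * L + Mᴴ * M = 1 ∧ Rᴴ * M + Mᴴ * L = 0 ∧ Rᴴ * L = 0 := by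
  have h2' : R * Mᴴ + M * Lᴴ = 0 := by
    have := congrArg conjTranspose h2
    simpa [conjTranspose_add, conjTranspose_mul, add_comm] using this
  have h3' : R * Lᴴ = 0 := by
    have := congrArg conjTranspose h3
    simpa [conjTranspose_mul] using this
  -- key: for z on the unit circle, E z holds
  have E : ∀ z : ℂ, z * star z = 1 →
      (Rᴴ * R + Lᴴ * L + Mᴴ * M)
      + star z • (Rᴴ * M + Mᴴ * L) + z • (Mᴴ * R + Lᴴ * M)
      + (star z * star z) • (Rᴴ * L) + (z * z) • (Lᴴ * R) = 1 := by
    intro z hz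
    have hz' : star z * z = 1 := by rwa [mul_comm] at hz
    have hW : (z • R + M + star z • L) * ((z • R + M + star z • L))ᴴ = 1 := by
      rw [qca_expand', hz, hz', h2, h2', h3, h3', one_smul, one_smul, smul_zero,
        smul_zero, smul_zero, smul_zero, add_zero, add_zero, add_zero, add_zero, h1]
    have hW' := mul_eq_one_comm.mp hW
    rw [qca_expand R L M z, hz, hz'] at hW'
    rw [← hW']
    module
  -- instantiate at the five points
  have E1 := E 1 (by simp)
  simp only [star_one, one_mul] at E1
  have E2 := E (-1) (by simp)
  simp only [star_neg, star_one] at E2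
  rw [show ((-1:ℂ) * (-1)) = (1:ℂ) by norm_num] at E2
  have E3 := E I (by simp)
  simp only [Complex.star_def, Complex.conj_I] at E3
  rw [show ((-I) * (-I) : ℂ) = (-1:ℂ) by rw [neg_mul_neg, Complex.I_mul_I],
    show ((I:ℂ) * I) = (-1:ℂ) from Complex.I_mul_I] at E3
  have E4 := E (-I) (by simp)
  simp only [star_neg, Complex.star_def, Complex.conj_I, neg_neg] at E4
  rw [show ((-I) * (-I) : ℂ) = (-1:ℂ) by rw [neg_mul_neg, Complex.I_mul_I],
    show ((I:ℂ) * I) = (-1:ℂ) from Complex.I_mul_I] at E4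
  set ζ : ℂ := (Real.sqrt 2 : ℂ) / 2 * (1 + I) with hζdef
  have hs : ((Real.sqrt 2 : ℂ)) * (Real.sqrt 2 : ℂ) = 2 := by
    rw [← Complex.ofReal_mul, Real.mul_self_sqrt (by norm_num)]; norm_num
  have hstar : star ζ = (Real.sqrt 2 : ℂ) / 2 * (1 - I) := by
    rw [hζdef]
    simp [Complex.star_def, map_div₀, Complex.conj_ofReal]
    ring
  have hz5 : ζ * star ζ = 1 := by
    rw [hstar, hζdef]
    linear_combination ((1 + I) * (1 - I) / 4) * hs - (1 / 2 : ℂ) * Complex.I_mul_I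
  have hζζ : ζ * ζ = I := by
    rw [hζdef]
    linear_combination ((1 + I) * (1 + I) / 4) * hs + (1 / 2 : ℂ) * Complex.I_mul_I
  have hstst : star ζ * star ζ = -I := by
    rw [hstar]
    linear_combination ((1 - I) * (1 - I) / 4) * hs + (1 / 2 : ℂ) * Complex.I_mul_I
  have E5 := E ζ hz5
  rw [hstst, hζζ] at E5
  exact qca_solve5 _ _ _ _ _ _ (star ζ) ζ E1 E2 E3 E4 E5

lemma qca_inner_mulVec_single {n : ℕ} (w : EuclideanSpace ℂ (Fin n)) (A : Matrix (Fin n) (Fin n) ℂ) (i : Fin n) :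
    (inner ℂ w (WithLp.toLp 2 (A.mulVec (Pi.single i 1)) : EuclideanSpace ℂ (Fin n)) : ℂ)
      = (starRingEnd ℂ) (Aᴴ.mulVec (fun j => w j) i) := by
  simp only [PiLp.inner_apply, RCLike.inner_apply, Matrix.mulVec_single, Matrix.mulVec,
    dotProduct, Matrix.conjTranspose_apply, map_sum, _root_.map_mul, Complex.conj_conj,
    RCLike.star_def, MulOpposite.op_one, one_smul, Matrix.col_apply]

theorem qca_unitarity_iff (Λ : ℕ) (R L M : Matrix (Fin Λ) (Fin Λ) ℂ)
    (U : lp (fun _ : ℤ => EuclideanSpace ℂ (Fin Λ)) 2 →L[ℂ]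
         lp (fun _ : ℤ => EuclideanSpace ℂ (Fin Λ)) 2)
    (hU : ∀ (ψ : lp (fun _ : ℤ => EuclideanSpace ℂ (Fin Λ)) 2) (x : ℤ) (i : Fin Λ),
      (U ψ : ∀ _ : ℤ, EuclideanSpace ℂ (Fin Λ)) x i =
        R.mulVec (fun j => (ψ : ∀ _ : ℤ, EuclideanSpace ℂ (Fin Λ)) (x + 1) j) i
        + L.mulVec (fun j => (ψ : ∀ _ : ℤ, EuclideanSpace ℂ (Fin Λ)) (x - 1) j) i
        + M.mulVec (fun j => (ψ : ∀ _ : ℤ, EuclideanSpace ℂ (Fin Λ)) x j) i) :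
    U ∈ unitary (lp (fun _ : ℤ => EuclideanSpace ℂ (Fin Λ)) 2 →L[ℂ]
                 lp (fun _ : ℤ => EuclideanSpace ℂ (Fin Λ)) 2) ↔
      (R * Rᴴ + L * Lᴴ + M * Mᴴ = 1 ∧ M * Rᴴ + L * Mᴴ = 0 ∧ L * Rᴴ = 0) := by
  classical
  -- the pointwise formula for `star U`
  have hAdj : ∀ (ψ : lp (fun _ : ℤ => EuclideanSpace ℂ (Fin Λ)) 2) (x : ℤ) (i : Fin Λ),
      ((star U) ψ : ∀ _ : ℤ, EuclideanSpace ℂ (Fin Λ)) x i =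
        Rᴴ.mulVec (fun j => (ψ : ∀ _ : ℤ, EuclideanSpace ℂ (Fin Λ)) (x - 1) j) i
        + Lᴴ.mulVec (fun j => (ψ : ∀ _ : ℤ, EuclideanSpace ℂ (Fin Λ)) (x + 1) j) i
        + Mᴴ.mulVec (fun j => (ψ : ∀ _ : ℤ, EuclideanSpace ℂ (Fin Λ)) x j) i := by
    intro ψ x i
    set χ : lp (fun _ : ℤ => EuclideanSpace ℂ (Fin Λ)) 2 :=
      lp.single 2 x (EuclideanSpace.single i (1:ℂ)) with hχdef
    have hχv : ∀ y : ℤ, y ≠ x → (χ : ∀ _ : ℤ, EuclideanSpace ℂ (Fin Λ)) y = 0 :=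
      fun y hy => lp.single_apply_ne 2 x _ hy
    have hχx : (χ : ∀ _ : ℤ, EuclideanSpace ℂ (Fin Λ)) x = EuclideanSpace.single i 1 :=
      lp.single_apply_self 2 x _
    have hsingle : (fun l => (EuclideanSpace.single i (1:ℂ)) l) = Pi.single i (1:ℂ) := by
      funext l; simp [EuclideanSpace.single_apply, Pi.single_apply]
    have hUz : ∀ y : ℤ, y ≠ x - 1 → y ≠ x + 1 → y ≠ x →
        (U χ : ∀ _ : ℤ, EuclideanSpace ℂ (Fin Λ)) y = 0 := by
      intro y h1 h2 h3
      ext k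
      have e1 : (fun j => (χ : ∀ _ : ℤ, EuclideanSpace ℂ (Fin Λ)) (y+1) j) = (0 : Fin Λ → ℂ) := by
        rw [hχv (y+1) (by omega)]; funext _; simp
      have e2 : (fun j => (χ : ∀ _ : ℤ, EuclideanSpace ℂ (Fin Λ)) (y-1) j) = (0 : Fin Λ → ℂ) := by
        rw [hχv (y-1) (by omega)]; funext _; simp
      have e3 : (fun j => (χ : ∀ _ : ℤ, EuclideanSpace ℂ (Fin Λ)) y j) = (0 : Fin Λ → ℂ) := by
        rw [hχv y h3]; funext _; simp
      rw [hU χ y k, e1, e2, e3, Matrix.mulVec_zero, Matrix.mulVec_zero, Matrix.mulVec_zero]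
      simp
    have hUy1 : (U χ : ∀ _ : ℤ, EuclideanSpace ℂ (Fin Λ)) (x-1)
        = (WithLp.toLp 2 (R.mulVec (Pi.single i 1)) : EuclideanSpace ℂ (Fin Λ)) := by
      ext k
      have e1 : (fun j => (χ : ∀ _ : ℤ, EuclideanSpace ℂ (Fin Λ)) (x-1+1) j) = Pi.single i (1:ℂ) := by
        rw [show x-1+1 = x by ring, hχx]; exact hsingle
      have e2 : (fun j => (χ : ∀ _ : ℤ, EuclideanSpace ℂ (Fin Λ)) (x-1-1) j) = (0 : Fin Λ → ℂ) := by
        rw [hχv _ (by omega)]; funext _; simp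
      have e3 : (fun j => (χ : ∀ _ : ℤ, EuclideanSpace ℂ (Fin Λ)) (x-1) j) = (0 : Fin Λ → ℂ) := by
        rw [hχv _ (by omega)]; funext _; simp
      rw [hU χ (x-1) k, e1, e2, e3, Matrix.mulVec_zero, Matrix.mulVec_zero]
      simp
    have hUy2 : (U χ : ∀ _ : ℤ, EuclideanSpace ℂ (Fin Λ)) (x+1)
        = (WithLp.toLp 2 (L.mulVec (Pi.single i 1)) : EuclideanSpace ℂ (Fin Λ)) := by
      ext k
      have e1 : (fun j => (χ : ∀ _ : ℤ, EuclideanSpace ℂ (Fin Λ)) (x+1+1) j) = (0 : Fin Λ → ℂ) := by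
        rw [hχv _ (by omega)]; funext _; simp
      have e2 : (fun j => (χ : ∀ _ : ℤ, EuclideanSpace ℂ (Fin Λ)) (x+1-1) j) = Pi.single i (1:ℂ) := by
        rw [show x+1-1 = x by ring, hχx]; exact hsingle
      have e3 : (fun j => (χ : ∀ _ : ℤ, EuclideanSpace ℂ (Fin Λ)) (x+1) j) = (0 : Fin Λ → ℂ) := by
        rw [hχv _ (by omega)]; funext _; simp
      rw [hU χ (x+1) k, e1, e2, e3, Matrix.mulVec_zero, Matrix.mulVec_zero]
      simp
    have hUy3 : (U χ : ∀ _ : ℤ, EuclideanSpace ℂ (Fin Λ)) x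
        = (WithLp.toLp 2 (M.mulVec (Pi.single i 1)) : EuclideanSpace ℂ (Fin Λ)) := by
      ext k
      have e1 : (fun j => (χ : ∀ _ : ℤ, EuclideanSpace ℂ (Fin Λ)) (x+1) j) = (0 : Fin Λ → ℂ) := by
        rw [hχv _ (by omega)]; funext _; simp
      have e2 : (fun j => (χ : ∀ _ : ℤ, EuclideanSpace ℂ (Fin Λ)) (x-1) j) = (0 : Fin Λ → ℂ) := by
        rw [hχv _ (by omega)]; funext _; simp
      have e3 : (fun j => (χ : ∀ _ : ℤ, EuclideanSpace ℂ (Fin Λ)) x j) = Pi.single i (1:ℂ) := by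
        rw [hχx]; exact hsingle
      rw [hU χ x k, e1, e2, e3, Matrix.mulVec_zero, Matrix.mulVec_zero]
      simp
    have h1 : (inner ℂ ((star U) ψ) χ : ℂ)
        = (starRingEnd ℂ) (((star U) ψ : ∀ _ : ℤ, EuclideanSpace ℂ (Fin Λ)) x i) := by
      rw [hχdef, lp.inner_single_right, EuclideanSpace.inner_single_right, one_mul]
    have h2 : (inner ℂ ((star U) ψ) χ : ℂ) = inner ℂ ψ (U χ) := by
      rw [ContinuousLinearMap.star_eq_adjoint]
      exact ContinuousLinearMap.adjoint_inner_left U χ ψ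
    have h3 : (inner ℂ ψ (U χ) : ℂ) = ∑ y ∈ ({x-1, x+1, x} : Finset ℤ),
        (inner ℂ ((ψ : ∀ _ : ℤ, EuclideanSpace ℂ (Fin Λ)) y)
          ((U χ : ∀ _ : ℤ, EuclideanSpace ℂ (Fin Λ)) y) : ℂ) := by
      rw [lp.inner_eq_tsum]
      refine tsum_eq_sum ?_
      intro y hy
      simp only [Finset.mem_insert, Finset.mem_singleton, not_or] at hy
      rw [hUz y hy.1 hy.2.1 hy.2.2]
      exact inner_zero_right _
    have h4 : (∑ y ∈ ({x-1, x+1, x} : Finset ℤ),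
        (inner ℂ ((ψ : ∀ _ : ℤ, EuclideanSpace ℂ (Fin Λ)) y)
          ((U χ : ∀ _ : ℤ, EuclideanSpace ℂ (Fin Λ)) y) : ℂ))
        = (starRingEnd ℂ) (Rᴴ.mulVec (fun j => (ψ : ∀ _ : ℤ, EuclideanSpace ℂ (Fin Λ)) (x - 1) j) i
            + Lᴴ.mulVec (fun j => (ψ : ∀ _ : ℤ, EuclideanSpace ℂ (Fin Λ)) (x + 1) j) i
            + Mᴴ.mulVec (fun j => (ψ : ∀ _ : ℤ, EuclideanSpace ℂ (Fin Λ)) x j) i) := by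
      rw [Finset.sum_insert (by simp only [Finset.mem_insert, Finset.mem_singleton]; omega), Finset.sum_insert (by simp only [Finset.mem_singleton]; omega),
        Finset.sum_singleton, hUy1, hUy2, hUy3,
        qca_inner_mulVec_single, qca_inner_mulVec_single, qca_inner_mulVec_single]
      simp only [map_add]
      ring
    have := (h1.symm.trans h2).trans (h3.trans h4)
    exact (starRingEnd ℂ).injective this

  -- vector forms
  have hUVv : ∀ (ψ : lp (fun _ : ℤ => EuclideanSpace ℂ (Fin Λ)) 2) (x : ℤ),
      (fun j => (U ψ : ∀ _ : ℤ, EuclideanSpace ℂ (Fin Λ)) x j)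
        = (R.mulVec (fun l => (ψ : ∀ _ : ℤ, EuclideanSpace ℂ (Fin Λ)) (x+1) l)
          + L.mulVec (fun l => (ψ : ∀ _ : ℤ, EuclideanSpace ℂ (Fin Λ)) (x-1) l)
          + M.mulVec (fun l => (ψ : ∀ _ : ℤ, EuclideanSpace ℂ (Fin Λ)) x l) : Fin Λ → ℂ) := by
    intro ψ x; funext j; simp only [Pi.add_apply]; exact hU ψ x j
  have hAdjV : ∀ (ψ : lp (fun _ : ℤ => EuclideanSpace ℂ (Fin Λ)) 2) (x : ℤ),
      (fun j => ((star U) ψ : ∀ _ : ℤ, EuclideanSpace ℂ (Fin Λ)) x j)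
        = (Rᴴ.mulVec (fun l => (ψ : ∀ _ : ℤ, EuclideanSpace ℂ (Fin Λ)) (x-1) l)
          + Lᴴ.mulVec (fun l => (ψ : ∀ _ : ℤ, EuclideanSpace ℂ (Fin Λ)) (x+1) l)
          + Mᴴ.mulVec (fun l => (ψ : ∀ _ : ℤ, EuclideanSpace ℂ (Fin Λ)) x l) : Fin Λ → ℂ) := by
    intro ψ x; funext j; simp only [Pi.add_apply]; exact hAdj ψ x j
  -- composite formulas
  have hUU : ∀ (ψ : lp (fun _ : ℤ => EuclideanSpace ℂ (Fin Λ)) 2) (x : ℤ) (i : Fin Λ),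
      (U ((star U) ψ) : ∀ _ : ℤ, EuclideanSpace ℂ (Fin Λ)) x i =
        ((R*Rᴴ + L*Lᴴ + M*Mᴴ).mulVec (fun j => (ψ : ∀ _ : ℤ, EuclideanSpace ℂ (Fin Λ)) x j)) i
        + ((R*Mᴴ + M*Lᴴ).mulVec (fun j => (ψ : ∀ _ : ℤ, EuclideanSpace ℂ (Fin Λ)) (x+1) j)) i
        + ((M*Rᴴ + L*Mᴴ).mulVec (fun j => (ψ : ∀ _ : ℤ, EuclideanSpace ℂ (Fin Λ)) (x-1) j)) i
        + ((R*Lᴴ).mulVec (fun j => (ψ : ∀ _ : ℤ, EuclideanSpace ℂ (Fin Λ)) (x+2) j)) i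
        + ((L*Rᴴ).mulVec (fun j => (ψ : ∀ _ : ℤ, EuclideanSpace ℂ (Fin Λ)) (x-2) j)) i := by
    intro ψ x i
    rw [hU ((star U) ψ) x i, hAdjV ψ (x+1), hAdjV ψ (x-1), hAdjV ψ x]
    simp only [Matrix.mulVec_add, Matrix.mulVec_mulVec, Matrix.add_mulVec, Pi.add_apply]
    simp only [show x+1-1 = x from by ring, show x-1+1 = x from by ring,
      show x+1+1 = x+2 from by ring, show x-1-1 = x-2 from by ring]
    ring
  have hVU : ∀ (ψ : lp (fun _ : ℤ => EuclideanSpace ℂ (Fin Λ)) 2) (x : ℤ) (i : Fin Λ),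
      ((star U) (U ψ) : ∀ _ : ℤ, EuclideanSpace ℂ (Fin Λ)) x i =
        ((Rᴴ*R + Lᴴ*L + Mᴴ*M).mulVec (fun j => (ψ : ∀ _ : ℤ, EuclideanSpace ℂ (Fin Λ)) x j)) i
        + ((Rᴴ*M + Mᴴ*L).mulVec (fun j => (ψ : ∀ _ : ℤ, EuclideanSpace ℂ (Fin Λ)) (x-1) j)) i
        + ((Mᴴ*R + Lᴴ*M).mulVec (fun j => (ψ : ∀ _ : ℤ, EuclideanSpace ℂ (Fin Λ)) (x+1) j)) i
        + ((Rᴴ*L).mulVec (fun j => (ψ : ∀ _ : ℤ, EuclideanSpace ℂ (Fin Λ)) (x-2) j)) i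
        + ((Lᴴ*R).mulVec (fun j => (ψ : ∀ _ : ℤ, EuclideanSpace ℂ (Fin Λ)) (x+2) j)) i := by
    intro ψ x i
    rw [hAdj (U ψ) x i, hUVv ψ (x-1), hUVv ψ (x+1), hUVv ψ x]
    simp only [Matrix.mulVec_add, Matrix.mulVec_mulVec, Matrix.add_mulVec, Pi.add_apply]
    simp only [show x-1+1 = x from by ring, show x+1-1 = x from by ring,
      show x-1-1 = x-2 from by ring, show x+1+1 = x+2 from by ring]
    ring
  constructor
  · -- forward direction
    intro hu
    obtain ⟨hsU, hUs⟩ := Unitary.mem_iff.mp hu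
    have heval : ∀ (ψ : lp (fun _ : ℤ => EuclideanSpace ℂ (Fin Λ)) 2) (x : ℤ) (i : Fin Λ),
        ((R*Rᴴ + L*Lᴴ + M*Mᴴ).mulVec (fun j => (ψ : ∀ _ : ℤ, EuclideanSpace ℂ (Fin Λ)) x j)) i
        + ((R*Mᴴ + M*Lᴴ).mulVec (fun j => (ψ : ∀ _ : ℤ, EuclideanSpace ℂ (Fin Λ)) (x+1) j)) i
        + ((M*Rᴴ + L*Mᴴ).mulVec (fun j => (ψ : ∀ _ : ℤ, EuclideanSpace ℂ (Fin Λ)) (x-1) j)) i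
        + ((R*Lᴴ).mulVec (fun j => (ψ : ∀ _ : ℤ, EuclideanSpace ℂ (Fin Λ)) (x+2) j)) i
        + ((L*Rᴴ).mulVec (fun j => (ψ : ∀ _ : ℤ, EuclideanSpace ℂ (Fin Λ)) (x-2) j)) i
        = (ψ : ∀ _ : ℤ, EuclideanSpace ℂ (Fin Λ)) x i := by
      intro ψ x i
      rw [← hUU ψ x i]
      have happ : U ((star U) ψ) = ψ := by
        have := congrArg (fun T : lp (fun _ : ℤ => EuclideanSpace ℂ (Fin Λ)) 2 →L[ℂ]
          lp (fun _ : ℤ => EuclideanSpace ℂ (Fin Λ)) 2 => T ψ) hUs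
        simpa using this
      rw [happ]
    refine ⟨?_, ?_, ?_⟩ <;> ext i j
    all_goals {
      have hzv : ∀ y : ℤ, y ≠ 0 →
          (fun l => ((lp.single 2 (0:ℤ) (EuclideanSpace.single j (1:ℂ)) :
            lp (fun _ : ℤ => EuclideanSpace ℂ (Fin Λ)) 2) : ∀ _ : ℤ, EuclideanSpace ℂ (Fin Λ)) y l)
            = (0 : Fin Λ → ℂ) := by
        intro y hy
        rw [lp.single_apply_ne 2 0 _ hy]; funext _; simp
      have h0v : (fun l => ((lp.single 2 (0:ℤ) (EuclideanSpace.single j (1:ℂ)) :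
            lp (fun _ : ℤ => EuclideanSpace ℂ (Fin Λ)) 2) : ∀ _ : ℤ, EuclideanSpace ℂ (Fin Λ)) 0 l)
            = Pi.single j (1:ℂ) := by
        rw [lp.single_apply_self]
        funext l; simp [EuclideanSpace.single_apply, Pi.single_apply]
      first
      | (have h := heval (lp.single 2 (0:ℤ) (EuclideanSpace.single j (1:ℂ))) 0 i
         rw [hzv (0+1) (by omega), hzv (0-1) (by omega), hzv (0+2) (by omega),
           hzv (0-2) (by omega), h0v] at h
         simp only [Matrix.mulVec_zero, Matrix.mulVec_single, Pi.zero_apply, add_zero, mul_one,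
           lp.single_apply_self] at h
         simpa [Matrix.one_apply, EuclideanSpace.single_apply] using h)
      | (have h := heval (lp.single 2 (0:ℤ) (EuclideanSpace.single j (1:ℂ))) 1 i
         rw [hzv 1 (by omega), hzv (1+1) (by omega), hzv (1+2) (by omega),
           hzv (1-2) (by omega), show (1:ℤ)-1 = 0 from by ring, h0v] at h
         simp only [Matrix.mulVec_zero, Matrix.mulVec_single, Pi.zero_apply, add_zero, zero_add,
           mul_one] at h
         rw [lp.single_apply_ne 2 0 _ (by omega : (1:ℤ) ≠ 0)] at h
         simpa using h)
      | (have h := heval (lp.single 2 (0:ℤ) (EuclideanSpace.single j (1:ℂ))) 2 i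
         rw [hzv 2 (by omega), hzv (2+1) (by omega), hzv (2-1) (by omega),
           hzv (2+2) (by omega), show (2:ℤ)-2 = 0 from by ring, h0v] at h
         simp only [Matrix.mulVec_zero, Matrix.mulVec_single, Pi.zero_apply, add_zero, zero_add,
           mul_one] at h
         rw [lp.single_apply_ne 2 0 _ (by omega : (2:ℤ) ≠ 0)] at h
         simpa using h)
    }
  · -- backward direction
    rintro ⟨h1, h2, h3⟩
    obtain ⟨d1, d2, d3⟩ := qca_dual R L M h1 h2 h3
    have h2' : R * Mᴴ + M * Lᴴ = 0 := by
      have := congrArg conjTranspose h2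
      simpa [conjTranspose_add, conjTranspose_mul, add_comm] using this
    have h3' : R * Lᴴ = 0 := by
      have := congrArg conjTranspose h3
      simpa [conjTranspose_mul] using this
    have d2' : Mᴴ * R + Lᴴ * M = 0 := by
      have := congrArg conjTranspose d2
      simpa [conjTranspose_add, conjTranspose_mul, add_comm] using this
    have d3' : Lᴴ * R = 0 := by
      have := congrArg conjTranspose d3
      simpa [conjTranspose_mul] using this
    rw [Unitary.mem_iff]
    constructor
    · refine ContinuousLinearMap.ext fun ψ => ?_
      refine lp.ext (funext fun x => PiLp.ext fun i => ?_)
      have : ((star U * U) ψ : ∀ _ : ℤ, EuclideanSpace ℂ (Fin Λ)) x i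
          = ((star U) (U ψ) : ∀ _ : ℤ, EuclideanSpace ℂ (Fin Λ)) x i := rfl
      rw [this, hVU ψ x i, d1, d2, d2', d3, d3']
      simp [Matrix.zero_mulVec, Matrix.one_mulVec]
    · refine ContinuousLinearMap.ext fun ψ => ?_
      refine lp.ext (funext fun x => PiLp.ext fun i => ?_)
      have : ((U * star U) ψ : ∀ _ : ℤ, EuclideanSpace ℂ (Fin Λ)) x i
          = (U ((star U) ψ) : ∀ _ : ℤ, EuclideanSpace ℂ (Fin Λ)) x i := rfl
      rw [this, hUU ψ x i, h1, h2, h2', h3, h3']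
      simp [Matrix.zero_mulVec, Matrix.one_mulVec]
end

section
/- For m ∈ [0,1] and k ∈ ℝ, the normalized vectors |s⟩_k = (1/√2)(√(1 − s v), s √(1 + s v))ᵀ with s = ±1, where v = ∂_k ω(k,m) is the group velocity of the dispersion ω(k,m) = arccos(√(1−m²) cos k), are eigenvectors of U(k) = ((√(1−m²) e^{ik}, −i m), (−i m, √(1−m²) e^{−ik})) with eigenvalues e^{−i s ω(k,m)}, provided appropriate phase conventions; in particular the two vectors |+⟩_k and |−⟩_k are orthonormal. -/
open Matrix

theorem dirac_automaton_eigenvectors (m k : ℝ) (hm : m ∈ Set.Icc (0:ℝ) 1) :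
    let n : ℝ := Real.sqrt (1 - m ^ 2)
    let ω : ℝ := Real.arccos (n * Real.cos k)
    let v : ℝ := n * Real.sin k / Real.sin ω
    let U : Matrix (Fin 2) (Fin 2) ℂ :=
      !![(n : ℂ) * Complex.exp (Complex.I * k), -Complex.I * m;
         -Complex.I * m, (n : ℂ) * Complex.exp (-(Complex.I * k))]
    let u : ℝ → Fin 2 → ℂ := fun s =>
      ![(Real.sqrt (1 - s * v) / Real.sqrt 2 : ℝ),
        ((s * Real.sqrt (1 + s * v) / Real.sqrt 2 : ℝ) : ℂ)]
    (∀ s : ℝ, s = 1 ∨ s = -1 →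
        U.mulVec (u s) = Complex.exp (-(Complex.I * s * ω)) • u s) ∧
    (∀ s s' : ℝ, (s = 1 ∨ s = -1) → (s' = 1 ∨ s' = -1) →
        (∑ i : Fin 2, (starRingEnd ℂ) (u s i) * u s' i) = if s = s' then 1 else 0) := by
  intro n ω v U u
  obtain ⟨hm0, hm1⟩ := hm
  have hm2 : m ^ 2 ≤ 1 := by nlinarith
  have hn0 : (0:ℝ) ≤ n := Real.sqrt_nonneg _
  have hn2 : n ^ 2 = 1 - m ^ 2 := Real.sq_sqrt (by nlinarith)
  have hcos : Real.cos ω = n * Real.cos k := by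
    simp only [ω]
    exact Real.cos_arccos (by nlinarith [Real.neg_one_le_cos k, Real.cos_le_one k, Real.sin_sq_add_cos_sq k, sq_nonneg (n * Real.cos k + 1)]) (by nlinarith [Real.cos_le_one k, Real.sin_sq_add_cos_sq k, sq_nonneg (n * Real.cos k - 1)])
  have hsin0 : 0 ≤ Real.sin ω := Real.sin_nonneg_of_nonneg_of_le_pi (by simp only [ω]; exact Real.arccos_nonneg _) (by simp only [ω]; exact Real.arccos_le_pi _)
  have hsin2 : Real.sin ω ^ 2 = m ^ 2 + n ^ 2 * Real.sin k ^ 2 := by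
    have h1 := Real.sin_sq_add_cos_sq ω
    have h2 := Real.sin_sq_add_cos_sq k
    have hc2 : Real.cos ω ^ 2 = n ^ 2 * Real.cos k ^ 2 := by rw [hcos]; ring
    linear_combination h1 - hc2 - n ^ 2 * h2 - hn2
  have hv : Real.sin ω * v = n * Real.sin k := by
    by_cases h : Real.sin ω = 0
    · simp only [v, h, div_zero, mul_zero]
      have : n ^ 2 * Real.sin k ^ 2 = 0 := by nlinarith [sq_nonneg m]
      have : n * Real.sin k = 0 := by nlinarith [sq_nonneg (n * Real.sin k)]
      linarith
    · simp only [v]; field_simp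
  have hkey : Real.sin ω ^ 2 * (1 - v ^ 2) = m ^ 2 := by
    have hv2 : (Real.sin ω * v) ^ 2 = (n * Real.sin k) ^ 2 := by rw [hv]
    linear_combination hsin2 - hv2
  have hv1 : v ^ 2 ≤ 1 := by
    by_cases h : Real.sin ω = 0
    · simp only [v, h, div_zero]; norm_num
    · have hsp : 0 < Real.sin ω ^ 2 := by positivity
      nlinarith [hkey, sq_nonneg m, hsp]
  have hvle : -1 ≤ v ∧ v ≤ 1 := ⟨by nlinarith, by nlinarith⟩
  have h1v : (0:ℝ) ≤ 1 - v ^ 2 := by nlinarith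
  have hmsin : Real.sin ω * Real.sqrt (1 - v ^ 2) = m := by
    have h2 : (Real.sin ω * Real.sqrt (1 - v ^ 2)) ^ 2 = m ^ 2 := by
      rw [mul_pow, Real.sq_sqrt h1v]; linarith
    have h3 : Real.sin ω * Real.sqrt (1 - v ^ 2) = Real.sqrt (m ^ 2) := by
      rw [← h2, Real.sqrt_sq (mul_nonneg hsin0 (Real.sqrt_nonneg _))]
    rw [h3, Real.sqrt_sq hm0]
  have h1mv : (0:ℝ) ≤ 1 - v := by nlinarith
  have h1pv : (0:ℝ) ≤ 1 + v := by nlinarith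
  have hA2 : Real.sqrt (1 - v) ^ 2 = 1 - v := Real.sq_sqrt h1mv
  have hB2 : Real.sqrt (1 + v) ^ 2 = 1 + v := Real.sq_sqrt h1pv
  have hAB : Real.sqrt (1 - v) * Real.sqrt (1 + v) = Real.sqrt (1 - v ^ 2) := by
    rw [← Real.sqrt_mul h1mv]; congr 1; ring
  have h22 : Real.sqrt 2 ^ 2 = 2 := Real.sq_sqrt (by norm_num)
  clear_value v
  clear_value ω
  clear_value n
  constructor
  · rintro s (rfl | rfl)
    · funext i
      fin_cases i <;>
        simp [U, u, Matrix.mulVec, dotProduct, Fin.sum_univ_two, Complex.ext_iff, Complex.exp_re, Complex.exp_im]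
      · refine ⟨Or.inl hcos.symm, ?_⟩
        linear_combination (-(Real.sqrt (1 - v)/Real.sqrt 2)) * hv - (Real.sin ω * Real.sqrt (1 - v)/Real.sqrt 2) * hB2 + (Real.sin ω * Real.sqrt (1 + v)/Real.sqrt 2) * hAB + (Real.sqrt (1 + v)/Real.sqrt 2) * hmsin
      · refine ⟨Or.inl hcos.symm, ?_⟩
        linear_combination (Real.sqrt (1 + v)/Real.sqrt 2) * hv - (Real.sin ω * Real.sqrt (1 + v)/Real.sqrt 2) * hA2 + (Real.sin ω * Real.sqrt (1 - v)/Real.sqrt 2) * hAB + (Real.sqrt (1 - v)/Real.sqrt 2) * hmsin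
    · funext i
      fin_cases i <;>
        simp [U, u, Matrix.mulVec, dotProduct, Fin.sum_univ_two, Complex.ext_iff, Complex.exp_re, Complex.exp_im] <;>
        rw [show (1:ℝ) + -v = 1 - v from by ring]
      · refine ⟨Or.inl hcos.symm, ?_⟩
        linear_combination (-(Real.sqrt (1 + v)/Real.sqrt 2)) * hv + (Real.sin ω * Real.sqrt (1 + v)/Real.sqrt 2) * hA2 - (Real.sin ω * Real.sqrt (1 - v)/Real.sqrt 2) * hAB - (Real.sqrt (1 - v)/Real.sqrt 2) * hmsin
      · refine ⟨Or.inl hcos.symm, ?_⟩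
        linear_combination (-(Real.sqrt (1 - v)/Real.sqrt 2)) * hv - (Real.sin ω * Real.sqrt (1 - v)/Real.sqrt 2) * hB2 + (Real.sin ω * Real.sqrt (1 + v)/Real.sqrt 2) * hAB + (Real.sqrt (1 + v)/Real.sqrt 2) * hmsin
  · have hmul : Real.sqrt 2 * Real.sqrt 2 = 2 := Real.mul_self_sqrt (by norm_num)
    rintro s s' (rfl | rfl) (rfl | rfl) <;>
      simp [u, Fin.sum_univ_two, Complex.ext_iff] <;> norm_num
    · rw [div_mul_div_comm, div_mul_div_comm, hmul]
      linear_combination (1/2) * hA2 + (1/2) * hB2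
    · rw [show (1:ℝ) + -v = 1 - v from by ring]; ring
    · rw [show (1:ℝ) + -v = 1 - v from by ring]; ring
    · rw [show (1:ℝ) + -v = 1 - v from by ring, div_mul_div_comm, div_mul_div_comm, hmul]
      linear_combination (1/2) * hA2 + (1/2) * hB2
end

section
/- The group velocity of the Dirac automaton dispersion relation satisfies v(k₀, m) = √((1 − m²)/(1 + m² cot²(k₀))) for k₀ ∈ (0, π) and m ∈ (0, 1), where v = ∂_k ω evaluated at k₀ and ω(k,m) = arccos(√(1−m²) cos k). -/
theorem dirac_automaton_group_velocity (m k₀ : ℝ) (hm : m ∈ Set.Ioo (0:ℝ) 1)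
    (hk : k₀ ∈ Set.Ioo 0 Real.pi) :
    HasDerivAt (fun k : ℝ => Real.arccos (Real.sqrt (1 - m ^ 2) * Real.cos k))
      (Real.sqrt ((1 - m ^ 2) / (1 + m ^ 2 * (Real.cos k₀ / Real.sin k₀) ^ 2))) k₀ := by
  obtain ⟨hm0, hm1⟩ := hm
  obtain ⟨hk0, hkπ⟩ := hk
  have hs : 0 < Real.sin k₀ := Real.sin_pos_of_pos_of_lt_pi hk0 hkπ
  set c := Real.sqrt (1 - m ^ 2) with hc
  have hm2 : 0 < 1 - m ^ 2 := by nlinarith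
  have hc2 : c ^ 2 = 1 - m ^ 2 := Real.sq_sqrt hm2.le
  have hc0 : 0 < c := Real.sqrt_pos.mpr hm2
  have hc1 : c < 1 := by nlinarith
  have hcos : |Real.cos k₀| ≤ 1 := Real.abs_cos_le_one k₀
  have habs : |c * Real.cos k₀| < 1 := by
    rw [abs_mul, abs_of_pos hc0]
    calc c * |Real.cos k₀| ≤ c * 1 := by nlinarith
    _ < 1 := by linarith
  obtain ⟨hl, hr⟩ := abs_lt.mp habs
  have hne1 : c * Real.cos k₀ ≠ 1 := ne_of_lt hr
  have hne1' : c * Real.cos k₀ ≠ -1 := ne_of_gt hl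
  have hf : HasDerivAt (fun k : ℝ => c * Real.cos k) (c * (-Real.sin k₀)) k₀ :=
    (Real.hasDerivAt_cos k₀).const_mul c
  have h := (Real.hasDerivAt_arccos hne1' hne1).comp k₀ hf
  convert h using 1
  case e'_4 => rfl
  case e'_5 => rfl
  case e'_8 => rfl
  have hD : 1 - (c * Real.cos k₀) ^ 2 = Real.sin k₀ ^ 2 + m ^ 2 * Real.cos k₀ ^ 2 := by
    have := Real.sin_sq_add_cos_sq k₀
    nlinarith
  have hDpos : 0 < 1 - (c * Real.cos k₀) ^ 2 := by nlinarith
  have harg : (1 - m ^ 2) / (1 + m ^ 2 * (Real.cos k₀ / Real.sin k₀) ^ 2)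
      = (c * Real.sin k₀) ^ 2 / (1 - (c * Real.cos k₀) ^ 2) := by
    rw [hD]
    have hs2 : Real.sin k₀ ^ 2 + m ^ 2 * Real.cos k₀ ^ 2 > 0 := by positivity
    field_simp
    nlinarith [Real.sin_sq_add_cos_sq k₀]
  have hsq : Real.sqrt ((c * Real.sin k₀) ^ 2) = c * Real.sin k₀ :=
    Real.sqrt_sq (by positivity)
  rw [harg, Real.sqrt_div (by positivity), hsq]
  have hne : Real.sqrt (1 - (c * Real.cos k₀) ^ 2) ≠ 0 := by positivity
  field_simp
end

section
/- For all m ∈ [0,1] and all k ∈ ℝ, the group velocity v = ∂_k ω(k,m) of the dispersion ω(k,m) = arccos(√(1−m²) cos k) satisfies |v| ≤ √(1−m²) ≤ 1 (where ω is differentiable). -/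
lemma abs_corner_contra (k v : ℝ) (h : HasDerivAt (fun x : ℝ => |x - k|) v k) : False := by
  have hshift : HasDerivAt (fun y : ℝ => y + k) 1 0 := (hasDerivAt_id 0).add_const k
  have h0 : HasDerivAt (fun y : ℝ => |y|) (v * 1) 0 := by
    have h' : HasDerivAt (fun x : ℝ => |x - k|) v (0 + k) := by rw [zero_add]; exact h
    have := h'.comp 0 hshift
    rw [show (fun y : ℝ => |y|) = (fun x : ℝ => |x - k|) ∘ (fun y : ℝ => y + k) by funext y; simp [Function.comp]]
    · exact this
  exact not_differentiableAt_abs_zero h0.differentiableAt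

theorem dirac_automaton_group_velocity_bound (m k v : ℝ) (hm : m ∈ Set.Icc (0:ℝ) 1)
    (hv : HasDerivAt (fun k : ℝ => Real.arccos (Real.sqrt (1 - m ^ 2) * Real.cos k)) v k) :
    |v| ≤ Real.sqrt (1 - m ^ 2) ∧ Real.sqrt (1 - m ^ 2) ≤ 1 := by
  obtain ⟨hm0, hm1⟩ := hm
  set a := Real.sqrt (1 - m ^ 2) with ha
  have hm2 : (0:ℝ) ≤ 1 - m ^ 2 := by nlinarith
  have ha2 : a ^ 2 = 1 - m ^ 2 := Real.sq_sqrt hm2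
  have ha0 : 0 ≤ a := Real.sqrt_nonneg _
  have ha1 : a ≤ 1 := by
    rw [ha]; exact (Real.sqrt_le_one).2 (by nlinarith)
  refine ⟨?_, ha1⟩
  set u := a * Real.cos k with hu
  have hcos := Real.neg_one_le_cos k
  have hcos' := Real.cos_le_one k
  by_cases hlt : |u| < 1
  · -- interior case: chain rule
    have h1 : u ≠ -1 := by intro h; rw [h] at hlt; simp at hlt
    have h2 : u ≠ 1 := by intro h; rw [h] at hlt; simp at hlt
    have hc : HasDerivAt (fun x : ℝ => a * Real.cos x) (a * (-Real.sin k)) k :=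
      (Real.hasDerivAt_cos k).const_mul a
    have hcomp := (Real.hasDerivAt_arccos h1 h2).comp k hc
    have hvval : v = -(1 / Real.sqrt (1 - u ^ 2)) * (a * (-Real.sin k)) :=
      hv.unique hcomp
    set s := Real.sqrt (1 - u ^ 2) with hs
    have hupos : (0:ℝ) < 1 - u ^ 2 := by
      have := abs_lt.1 hlt; nlinarith
    have hspos : 0 < s := Real.sqrt_pos.2 hupos
    have hs2 : s ^ 2 = 1 - u ^ 2 := Real.sq_sqrt hupos.le
    -- |v| = a * |sin k| / s ≤ a  ⟺  a * |sin k| ≤ a * s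
    have hsin : |Real.sin k| ≤ s := by
      rw [← Real.sqrt_sq_eq_abs, hs]
      apply Real.sqrt_le_sqrt
      have hsc := Real.sin_sq_add_cos_sq k
      have hu2 : u ^ 2 = a ^ 2 * Real.cos k ^ 2 := by rw [hu]; ring
      nlinarith [mul_nonneg (sq_nonneg m) (sq_nonneg (Real.cos k))]
    rw [hvval]
    have : |-(1 / s) * (a * -Real.sin k)| = a * |Real.sin k| / s := by
      rw [abs_mul, abs_mul, abs_neg, abs_neg, abs_div, abs_one, abs_of_pos hspos,
        abs_of_nonneg ha0]
      ring
    rw [this, div_le_iff₀ hspos]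
    nlinarith
  · -- boundary case: a = 1, |cos k| = 1, corner of |·|
    push_neg at hlt
    have huabs : |u| ≤ a := by
      rw [hu, abs_mul, abs_of_nonneg ha0]
      calc a * |Real.cos k| ≤ a * 1 := by
            exact mul_le_mul_of_nonneg_left (Real.abs_cos_le_one k) ha0
        _ = a := mul_one a
    have haeq : a = 1 := le_antisymm ha1 (le_trans hlt huabs)
    have hcabs : |Real.cos k| = 1 := by
      have : |u| = 1 := le_antisymm (haeq ▸ huabs) hlt
      rw [hu, haeq, one_mul] at this; exact this
    have hsk : Real.sin k = 0 := by
      have hsc := Real.sin_sq_add_cos_sq k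
      have : Real.cos k ^ 2 = 1 := by
        rw [← sq_abs, hcabs]; norm_num
      nlinarith [sq_nonneg (Real.sin k)]
    have hcoskey : ∀ x : ℝ, Real.cos x = Real.cos k * Real.cos (x - k) := by
      intro x
      have := Real.cos_add (x - k) k
      simp [hsk] at this
      rw [this]; ring
    exfalso
    rcases abs_eq (by norm_num : (0:ℝ) ≤ 1) |>.1 hcabs with hck | hck
    · -- cos k = 1 : f(x) = |x - k| near k
      have heq : (fun x : ℝ => |x - k|) =ᶠ[nhds k]
          (fun x : ℝ => Real.arccos (a * Real.cos x)) := by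
        filter_upwards [Metric.ball_mem_nhds k Real.pi_pos] with x hx
        have hxk : |x - k| ≤ Real.pi := le_of_lt (by simpa [Real.dist_eq] using hx)
        rw [haeq, one_mul, hcoskey x, hck, one_mul, ← Real.cos_abs,
          Real.arccos_cos (abs_nonneg _) hxk]
      exact abs_corner_contra k v (hv.congr_of_eventuallyEq heq)
    · -- cos k = -1 : f(x) = π - |x - k| near k
      have heq : (fun x : ℝ => Real.pi - |x - k|) =ᶠ[nhds k]
          (fun x : ℝ => Real.arccos (a * Real.cos x)) := by
        filter_upwards [Metric.ball_mem_nhds k Real.pi_pos] with x hx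
        have hxk : |x - k| ≤ Real.pi := le_of_lt (by simpa [Real.dist_eq] using hx)
        rw [haeq, one_mul, hcoskey x, hck]
        rw [show (-1 : ℝ) * Real.cos (x - k) = -(Real.cos (x - k)) by ring,
          Real.arccos_neg, ← Real.cos_abs, Real.arccos_cos (abs_nonneg _) hxk]
      have hv' : HasDerivAt (fun x : ℝ => Real.pi - |x - k|) v k :=
        hv.congr_of_eventuallyEq heq
      have hv'' : HasDerivAt (fun x : ℝ => |x - k|) (0 - v) k := by
        have := (hasDerivAt_const k Real.pi).sub hv'
        rw [show (fun x : ℝ => |x - k|) = (fun x : ℝ => Real.pi) - (fun x : ℝ => Real.pi - |x - k|) by funext x; simp]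
        exact this
      exact abs_corner_contra k _ hv''
end

section
/- Define α(k,m) = ω_D(k,m) − ω(k,m) where ω_D = √(k²+m²) and ω = arccos(√(1−m²) cos k). Then for each m ∈ [0,1], α is an even function of k, and α is nondecreasing on [0, π); hence max over k ∈ [−k̄, k̄] of |α| is attained at k ∈ {0, k̄} for any 0 ≤ k̄ < π. -/
set_option maxHeartbeats 1000000

open Real

theorem alpha_even_monotone (m : ℝ) (hm : m ∈ Set.Icc (0:ℝ) 1) :
    let α : ℝ → ℝ := fun k =>
      Real.sqrt (k ^ 2 + m ^ 2) - Real.arccos (Real.sqrt (1 - m ^ 2) * Real.cos k)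
    (∀ k : ℝ, α (-k) = α k) ∧
    MonotoneOn α (Set.Ico 0 Real.pi) ∧
    (∀ kb : ℝ, kb ∈ Set.Ico 0 Real.pi → ∀ k ∈ Set.Icc (-kb) kb,
      |α k| ≤ max |α 0| |α kb|) := by
  intro α
  obtain ⟨hm0, hm1⟩ := hm
  have hc2 : Real.sqrt (1 - m ^ 2) ^ 2 = 1 - m ^ 2 := Real.sq_sqrt (by nlinarith)
  set c := Real.sqrt (1 - m ^ 2) with hc
  have hc0 : 0 ≤ c := Real.sqrt_nonneg _
  have hc1 : c ≤ 1 := Real.sqrt_le_one.mpr (by nlinarith)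
  have heven : ∀ k : ℝ, α (-k) = α k := by
    intro k; simp [α, neg_pow, Real.cos_neg]
  have hmono : MonotoneOn α (Set.Ico 0 Real.pi) := by
    apply monotoneOn_of_deriv_nonneg (convex_Ico 0 Real.pi)
    · apply ContinuousOn.sub
      · exact (Real.continuous_sqrt.comp (by continuity)).continuousOn
      · exact (Real.continuous_arccos.comp (by continuity)).continuousOn
    all_goals {
      rw [interior_Ico]
      intro x hx
      obtain ⟨hx0, hxpi⟩ := hx
      have hsin : 0 < Real.sin x := Real.sin_pos_of_pos_of_lt_pi hx0 hxpi
      have hcos1 : Real.cos x < 1 := by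
        have := Real.cos_lt_cos_of_nonneg_of_le_pi (le_refl 0) hxpi.le hx0
        simpa using this
      have hcosn1 : -1 < Real.cos x := by
        nlinarith [Real.sin_sq_add_cos_sq x]
      have hu1 : c * Real.cos x < 1 := by nlinarith
      have hun1 : -1 < c * Real.cos x := by nlinarith
      have hne : x ^ 2 + m ^ 2 ≠ 0 := by positivity
      have h1 : HasDerivAt (fun k : ℝ => k ^ 2 + m ^ 2) (2 * x) x := by
        simpa using (hasDerivAt_pow 2 x).add_const (m ^ 2)
      have h2 : HasDerivAt (fun k : ℝ => Real.sqrt (k ^ 2 + m ^ 2))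
          (1 / (2 * Real.sqrt (x ^ 2 + m ^ 2)) * (2 * x)) x :=
        (Real.hasDerivAt_sqrt hne).comp x h1
      have h3 : HasDerivAt (fun k : ℝ => c * Real.cos k) (c * -Real.sin x) x :=
        (Real.hasDerivAt_cos x).const_mul c
      have h4 : HasDerivAt (fun k : ℝ => Real.arccos (c * Real.cos k))
          (-(1 / Real.sqrt (1 - (c * Real.cos x) ^ 2)) * (c * -Real.sin x)) x :=
        (Real.hasDerivAt_arccos (by linarith) (by linarith)).comp x h3
      have hα : HasDerivAt α
          (1 / (2 * Real.sqrt (x ^ 2 + m ^ 2)) * (2 * x) -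
            -(1 / Real.sqrt (1 - (c * Real.cos x) ^ 2)) * (c * -Real.sin x)) x := h2.sub h4
      first
      | exact hα.differentiableAt.differentiableWithinAt
      | (rw [hα.deriv]
         set S1 := Real.sqrt (x ^ 2 + m ^ 2) with hS1
         set S2 := Real.sqrt (1 - (c * Real.cos x) ^ 2) with hS2
         have hS1pos : 0 < S1 := Real.sqrt_pos.2 (by positivity)
         have hS2pos : 0 < S2 := Real.sqrt_pos.2 (by nlinarith)
         have hS1sq : S1 ^ 2 = x ^ 2 + m ^ 2 := Real.sq_sqrt (by positivity)
         have hS2sq : S2 ^ 2 = 1 - (c * Real.cos x) ^ 2 := Real.sq_sqrt (by nlinarith)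
         have key : c * Real.sin x * S1 ≤ x * S2 := by
           have h5 : (c * Real.sin x * S1) ^ 2 ≤ (x * S2) ^ 2 := by
             have e1 : (c * Real.sin x * S1) ^ 2 = c ^ 2 * Real.sin x ^ 2 * (x ^ 2 + m ^ 2) := by
               rw [mul_pow, mul_pow, hS1sq]
             have e2 : (x * S2) ^ 2 = x ^ 2 * (1 - (c * Real.cos x) ^ 2) := by
               rw [mul_pow, hS2sq]
             have e3 : (c * Real.cos x) ^ 2 = (1 - m ^ 2) * Real.cos x ^ 2 := by
               rw [mul_pow, hc2]
             rw [e1, e2, e3, hc2]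
             have hsle : Real.sin x ≤ x := Real.sin_le hx0.le
             nlinarith [Real.sin_sq_add_cos_sq x, sq_nonneg (m ^ 2 * Real.sin x),
               mul_nonneg (sq_nonneg m)
                 (mul_nonneg (sub_nonneg.2 hsle) (by linarith : (0:ℝ) ≤ x + Real.sin x))]
           have hl : 0 ≤ c * Real.sin x * S1 := by positivity
           calc c * Real.sin x * S1 = Real.sqrt ((c * Real.sin x * S1) ^ 2) :=
                 (Real.sqrt_sq hl).symm
             _ ≤ Real.sqrt ((x * S2) ^ 2) := Real.sqrt_le_sqrt h5
             _ = x * S2 := Real.sqrt_sq (by positivity)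
         have expand : 1 / (2 * S1) * (2 * x) - -(1 / S2) * (c * -Real.sin x)
             = x / S1 - c * Real.sin x / S2 := by
           field_simp
         rw [expand, sub_nonneg, div_le_div_iff₀ hS2pos hS1pos]
         linarith)
    }
  refine ⟨heven, hmono, ?_⟩
  intro kb hkb k hk
  have hkmem : |k| ∈ Set.Ico 0 Real.pi := by
    constructor
    · exact abs_nonneg k
    · have : |k| ≤ kb := abs_le.2 hk
      exact lt_of_le_of_lt this hkb.2
  have h0mem : (0:ℝ) ∈ Set.Ico 0 Real.pi := ⟨le_refl _, Real.pi_pos⟩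
  have hαk : α k = α |k| := by
    rcases abs_choice k with h | h
    · rw [h]
    · rw [h, heven k]
  have h1 : α 0 ≤ α |k| := hmono h0mem hkmem (abs_nonneg k)
  have h2 : α |k| ≤ α kb := hmono hkmem ⟨hkb.1, hkb.2⟩ (abs_le.2 hk)
  rw [hαk]
  rw [abs_le]
  constructor
  · calc -(max |α 0| |α kb|) ≤ -|α 0| := by simp [le_max_left]
      _ ≤ α 0 := neg_abs_le _
      _ ≤ α |k| := h1
  · calc α |k| ≤ α kb := h2
      _ ≤ |α kb| := le_abs_self _
      _ ≤ max |α 0| |α kb| := le_max_right _ _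
end

section
/- For every m ∈ [0,1] and every k ∈ [0, π), the inequality m² cos²(k) + sin²(k) − √(1−m²) cos(k) (k² + m²) ≥ 0 holds. -/
/-- Key inequality: `cos k * k ^ 2 ≤ sin k ^ 2` for `0 ≤ k < π/2`. -/
lemma cos_mul_sq_le_sin_sq (k : ℝ) (h0 : 0 ≤ k) (h1 : k < Real.pi / 2) :
    Real.cos k * k ^ 2 ≤ Real.sin k ^ 2 := by
  rcases eq_or_lt_of_le h0 with rfl | hk0
  · simp
  rcases le_or_gt k 1 with hk1 | hk1
  · -- small case: use series bounds
    have hs : k - k ^ 3 / 4 < Real.sin k := by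
      have := Real.sin_gt_sub_cube hk0; nlinarith [pow_pos hk0 3]
    have hc := Real.cos_bound (x := k) (by rw [abs_of_nonneg h0]; exact hk1)
    have hsk : (0:ℝ) ≤ k - k ^ 3 / 4 := by nlinarith
    have habs : |k| = k := abs_of_nonneg h0
    rw [habs] at hc
    have hc' : Real.cos k ≤ 1 - k ^ 2 / 2 + k ^ 4 * (5 / 96) := by
      have := abs_le.mp hc
      linarith [this.2]
    have hsin : Real.sin k ≥ k - k ^ 3 / 4 := le_of_lt hs
    nlinarith [sq_nonneg (k - k ^ 3 / 4), sq_nonneg k, sq_nonneg (k ^ 2),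
      mul_le_mul_of_nonneg_left hsin hsk]
  · -- large case: 1 < k < π/2
    have hcpos : 0 < Real.cos k := Real.cos_pos_of_mem_Ioo
      ⟨by linarith [Real.pi_pos], h1⟩
    have hle : Real.cos k ≤ Real.pi / 2 - k := by
      have : Real.cos k = Real.sin (Real.pi / 2 - k) := (Real.sin_pi_div_two_sub k).symm
      rw [this]
      exact Real.sin_le (by linarith)
    have hpi1 : Real.pi < 3.141593 := by
      exact Real.pi_lt_d6
    have hpi2 : 3.141592 < Real.pi := Real.pi_gt_d6
    have hsq : Real.sin k ^ 2 = 1 - Real.cos k ^ 2 := Real.sin_sq k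
    rw [hsq]
    nlinarith [sq_nonneg (Real.cos k), sq_nonneg (Real.pi / 2 - k),
      mul_le_mul_of_nonneg_left hle (sq_nonneg k), sq_nonneg (k - 1),
      mul_nonneg (sub_nonneg.mpr hle) hcpos.le]

theorem z_inequality (m k : ℝ) (hm : m ∈ Set.Icc (0:ℝ) 1)
    (hk : k ∈ Set.Ico 0 Real.pi) :
    m ^ 2 * Real.cos k ^ 2 + Real.sin k ^ 2 -
      Real.sqrt (1 - m ^ 2) * Real.cos k * (k ^ 2 + m ^ 2) ≥ 0 := by
  obtain ⟨hm0, hm1⟩ := hm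
  obtain ⟨hk0, hkpi⟩ := hk
  set n := Real.sqrt (1 - m ^ 2) with hn
  have h1m : (0:ℝ) ≤ 1 - m ^ 2 := by nlinarith
  have hn0 : 0 ≤ n := Real.sqrt_nonneg _
  have hn2 : n ^ 2 = 1 - m ^ 2 := Real.sq_sqrt h1m
  have hn1 : n ≤ 1 := by nlinarith
  set c := Real.cos k with hc
  set s := Real.sin k with hs
  rcases le_or_gt c 0 with hcle | hcpos
  · have h1 : 0 ≤ -(n * c * (k ^ 2 + m ^ 2)) := by
      have : 0 ≤ n * (-c) * (k ^ 2 + m ^ 2) := mul_nonneg (mul_nonneg hn0 (by linarith)) (by positivity)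
      nlinarith [this]
    nlinarith [sq_nonneg (m * c), sq_nonneg s]
  · have hklt : k < Real.pi / 2 := by
      by_contra hcon
      push_neg at hcon
      have : c ≤ 0 := Real.cos_nonpos_of_pi_div_two_le_of_le hcon (by linarith)
      linarith
    have hA : c * k ^ 2 ≤ s ^ 2 := cos_mul_sq_le_sin_sq k hk0 hklt
    have hcb : 1 - k ^ 2 / 2 ≤ c := Real.one_sub_sq_div_two_le_cos
    have hc1 : c ≤ 1 := Real.cos_le_one k
    have hB : 0 ≤ (1 + n) * (c - n) + k ^ 2 := by nlinarith
    have hprod : 0 ≤ c * (1 - n) * ((1 + n) * (c - n) + k ^ 2) :=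
      mul_nonneg (mul_nonneg hcpos.le (by linarith)) hB
    nlinarith [hA, hprod, hn2]
end

section
/- Define β(k,m) = (1/2)(1 − v v_D − √((1−v²)(1−v_D²))), where v = √(1−m²) sin k / √(sin²k + m² cos²k) and v_D = k/√(k²+m²). Then for each m ∈ [0,1], β is an even nonnegative function of k and is nondecreasing on [0, π). -/
open Real
open Real

lemma aux_div_sqrt_sq_le_one {a b : ℝ} (h : a ^ 2 ≤ b) :
    (a / Real.sqrt b) ^ 2 ≤ 1 := by
  rcases le_or_gt b 0 with hb | hb
  · have ha : a = 0 := by nlinarith [sq_nonneg a]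
    simp [ha]
  · rw [div_pow, Real.sq_sqrt hb.le]
    exact (div_le_one hb).2 h

lemma aux_cauchy {a b : ℝ} (ha : a ^ 2 ≤ 1) (hb : b ^ 2 ≤ 1) :
    a * b + Real.sqrt ((1 - a ^ 2) * (1 - b ^ 2)) ≤ 1 := by
  have h1 : Real.sqrt ((1 - a ^ 2) * (1 - b ^ 2)) ≤ ((1 - a ^ 2) + (1 - b ^ 2)) / 2 := by
    have h2 : ((1 - a ^ 2) + (1 - b ^ 2)) / 2
        = Real.sqrt ((((1 - a ^ 2) + (1 - b ^ 2)) / 2) ^ 2) :=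
      (Real.sqrt_sq (by nlinarith)).symm
    rw [h2]
    exact Real.sqrt_le_sqrt (by nlinarith [sq_nonneg (a ^ 2 - b ^ 2)])
  nlinarith [sq_nonneg (a - b)]

lemma aux_sin_sq {k : ℝ} (h0 : 0 ≤ k) (h1 : k < π / 2) :
    k ^ 2 * Real.cos k ≤ Real.sin k ^ 2 := by
  have hk2 : k = 2 * (k / 2) := by ring
  have hsin : Real.sin k = 2 * Real.sin (k / 2) * Real.cos (k / 2) := by
    rw [hk2, Real.sin_two_mul]; ring_nf
  have hcos : Real.cos k = 2 * Real.cos (k / 2) ^ 2 - 1 := by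
    rw [hk2, Real.cos_two_mul]; ring_nf
  have hSC := Real.sin_sq_add_cos_sq (k / 2)
  have hCpos : 0 < Real.cos (k / 2) := Real.cos_pos_of_mem_Ioo
    ⟨by linarith [Real.pi_pos], by linarith⟩
  have htC : k / 2 * Real.cos (k / 2) ≤ Real.sin (k / 2) := by
    rcases eq_or_lt_of_le h0 with h | h
    · simp [← h]
    · have ht := Real.lt_tan (by linarith : 0 < k / 2) (by linarith : k / 2 < π / 2)
      rw [Real.tan_eq_sin_div_cos] at ht
      exact le_of_lt ((lt_div_iff₀ hCpos).1 ht)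
  have h4 : (k / 2) ^ 2 * Real.cos (k / 2) ^ 2 ≤ Real.sin (k / 2) ^ 2 := by
    nlinarith [mul_nonneg (by linarith : (0:ℝ) ≤ k / 2) hCpos.le]
  have key : (2 * (k / 2)) ^ 2 * Real.cos (2 * (k / 2)) ≤ Real.sin (2 * (k / 2)) ^ 2 := by
    rw [Real.sin_two_mul, Real.cos_two_mul]
    nlinarith [mul_le_mul_of_nonneg_right h4 (sq_nonneg (Real.cos (k / 2))),
      sq_nonneg ((k / 2) * (1 - Real.cos (k / 2) ^ 2))]
  have hk' : 2 * (k / 2) = k := by ring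
  rwa [hk'] at key

lemma aux_one_sub_cos {k : ℝ} (h0 : 0 ≤ k) (h1 : k ≤ π) :
    1 - Real.cos k ≤ k ^ 2 / 2 := by
  have hk2 : k = 2 * (k / 2) := by ring
  have hcos : Real.cos k = 1 - 2 * Real.sin (k / 2) ^ 2 := by
    rw [hk2, Real.cos_two_mul, ← Real.sin_sq_add_cos_sq (k / 2)]; ring
  have hs1 : Real.sin (k / 2) ≤ k / 2 := Real.sin_le (by linarith)
  have hs0 : 0 ≤ Real.sin (k / 2) :=
    Real.sin_nonneg_of_nonneg_of_le_pi (by linarith) (by linarith [Real.pi_pos])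
  nlinarith

lemma aux_F {s k : ℝ} (hs0 : 0 ≤ s) (hs1 : s ≤ 1) (hk0 : 0 ≤ k) (hkpi : k < π) :
    s * Real.cos k * ((1 - s ^ 2) + k ^ 2) ≤ (1 - s ^ 2) + s ^ 2 * Real.sin k ^ 2 := by
  rcases le_or_gt (Real.cos k) 0 with hc | hc
  · have h1 : s * Real.cos k * ((1 - s ^ 2) + k ^ 2) ≤ 0 :=
      mul_nonpos_of_nonpos_of_nonneg (mul_nonpos_of_nonneg_of_nonpos hs0 hc)
        (by nlinarith)
    nlinarith [sq_nonneg (Real.sin k), sq_nonneg s]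
  · have hk2 : k < π / 2 := by
      by_contra h
      push_neg at h
      have := Real.cos_nonpos_of_pi_div_two_le_of_le h (by linarith [Real.pi_pos])
      linarith
    have h1 := aux_sin_sq hk0 hk2
    have h2 := aux_one_sub_cos hk0 hkpi.le
    have hS : Real.sin k ^ 2 = 1 - Real.cos k ^ 2 := by
      nlinarith [Real.sin_sq_add_cos_sq k]
    have hc1 : Real.cos k ≤ 1 := Real.cos_le_one k
    have h3 : (1 + s) * (s - Real.cos k) ≤ 2 * (1 - Real.cos k) := by nlinarith
    have hb : 0 ≤ k ^ 2 - (1 + s) * (s - Real.cos k) := by nlinarith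
    nlinarith [mul_nonneg (mul_nonneg hc.le (by linarith : (0:ℝ) ≤ 1 - s)) hb]


theorem beta_even_nonneg_monotone (m : ℝ) (hm : m ∈ Set.Icc (0:ℝ) 1) :
    let v : ℝ → ℝ := fun k =>
      Real.sqrt (1 - m ^ 2) * Real.sin k /
        Real.sqrt (Real.sin k ^ 2 + m ^ 2 * Real.cos k ^ 2)
    let vD : ℝ → ℝ := fun k => k / Real.sqrt (k ^ 2 + m ^ 2)
    let β : ℝ → ℝ := fun k =>
      (1 / 2) * (1 - v k * vD k - Real.sqrt ((1 - v k ^ 2) * (1 - vD k ^ 2)))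
    (∀ k : ℝ, β (-k) = β k) ∧ (∀ k : ℝ, 0 ≤ β k) ∧
    MonotoneOn β (Set.Ico 0 Real.pi) := by
  obtain ⟨hm0, hm1⟩ := hm
  intro v vD β
  have hm2 : (0:ℝ) ≤ 1 - m ^ 2 := by nlinarith
  constructor
  · -- even
    intro k
    have h1 : v (-k) = - v k := by
      simp only [v, Real.sin_neg, Real.cos_neg, neg_sq, mul_neg, neg_div]
    have h2 : vD (-k) = - vD k := by
      simp only [vD, neg_sq, neg_div]
    simp only [β, h1, h2, neg_mul_neg, neg_sq]
  constructor
  · -- nonneg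
    intro k
    have ha : v k ^ 2 ≤ 1 := by
      have := aux_div_sqrt_sq_le_one (a := Real.sqrt (1 - m ^ 2) * Real.sin k)
        (b := Real.sin k ^ 2 + m ^ 2 * Real.cos k ^ 2)
        (by rw [mul_pow, Real.sq_sqrt hm2]
            nlinarith [sq_nonneg (Real.sin k), sq_nonneg (m * Real.sin k),
              sq_nonneg (m * Real.cos k)])
      exact this
    have hb : vD k ^ 2 ≤ 1 :=
      aux_div_sqrt_sq_le_one (by nlinarith [sq_nonneg m])
    have := aux_cauchy ha hb
    simp only [β]
    linarith
  · -- monotone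
    rcases eq_or_lt_of_le hm0 with hmz | hmpos
    · -- m = 0
      have hz : ∀ k ∈ Set.Ico (0:ℝ) π, β k = 0 := by
        intro k hk
        rcases eq_or_lt_of_le hk.1 with h | h
        · simp only [β, v, vD, ← h, ← hmz]
          norm_num
        · have hsin : 0 < Real.sin k := Real.sin_pos_of_pos_of_lt_pi h hk.2
          have hvk : v k = 1 := by
            simp only [v, ← hmz]
            norm_num
            rw [Real.sqrt_sq hsin.le]
            exact div_self hsin.ne'
          have hvDk : vD k = 1 := by
            simp only [vD, ← hmz]
            norm_num
            rw [Real.sqrt_sq h.le]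
            exact div_self h.ne'
          simp only [β, hvk, hvDk]
          norm_num
      intro a ha b hb _
      rw [hz a ha, hz b hb]
    · -- 0 < m
      set s : ℝ := Real.sqrt (1 - m ^ 2) with hs_def
      have hs0 : 0 ≤ s := Real.sqrt_nonneg _
      have hs2 : s ^ 2 = 1 - m ^ 2 := Real.sq_sqrt hm2
      have hs1 : s ≤ 1 := by nlinarith
      set θ : ℝ → ℝ := fun k => Real.arctan (k / m) - Real.arctan (s * Real.sin k / m)
        with hθdef
      have hβθ : ∀ k : ℝ, β k = (1/2) * (1 - Real.cos (θ k)) := by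
        intro k
        have hD : 0 < Real.sin k ^ 2 + m ^ 2 * Real.cos k ^ 2 := by
          nlinarith [Real.sin_sq_add_cos_sq k, sq_nonneg (Real.sin k), sq_nonneg (Real.cos k)]
        have hK : 0 < k ^ 2 + m ^ 2 := by positivity
        have hDs : 0 < Real.sqrt (Real.sin k ^ 2 + m ^ 2 * Real.cos k ^ 2) := Real.sqrt_pos.2 hD
        have hKs : 0 < Real.sqrt (k ^ 2 + m ^ 2) := Real.sqrt_pos.2 hK
        have hA : Real.sqrt (1 + (k / m) ^ 2) = Real.sqrt (k ^ 2 + m ^ 2) / m := by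
          rw [show 1 + (k / m) ^ 2 = (k ^ 2 + m ^ 2) / m ^ 2 by field_simp; ring,
            Real.sqrt_div hK.le, Real.sqrt_sq hmpos.le]
        have hB : Real.sqrt (1 + (s * Real.sin k / m) ^ 2)
            = Real.sqrt (Real.sin k ^ 2 + m ^ 2 * Real.cos k ^ 2) / m := by
          rw [show 1 + (s * Real.sin k / m) ^ 2
                = (Real.sin k ^ 2 + m ^ 2 * Real.cos k ^ 2) / m ^ 2 by
              field_simp
              linear_combination (Real.sin k ^ 2) * hs2 - m ^ 2 * Real.sin_sq_add_cos_sq k,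
            Real.sqrt_div hD.le, Real.sqrt_sq hmpos.le]
        have hv1 : 1 - v k ^ 2
            = (m / Real.sqrt (Real.sin k ^ 2 + m ^ 2 * Real.cos k ^ 2)) ^ 2 := by
          simp only [v]
          rw [div_pow, div_pow, mul_pow, Real.sq_sqrt hm2, Real.sq_sqrt hD.le]
          rw [eq_div_iff hD.ne', sub_mul, div_mul_cancel₀ _ hD.ne']
          linear_combination m ^ 2 * Real.sin_sq_add_cos_sq k
        have hv2 : 1 - vD k ^ 2 = (m / Real.sqrt (k ^ 2 + m ^ 2)) ^ 2 := by
          simp only [vD]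
          rw [div_pow, div_pow, Real.sq_sqrt hK.le]
          rw [eq_div_iff hK.ne', sub_mul, div_mul_cancel₀ _ hK.ne']
          ring
        have hsqrt : Real.sqrt ((1 - v k ^ 2) * (1 - vD k ^ 2))
            = (m / Real.sqrt (Real.sin k ^ 2 + m ^ 2 * Real.cos k ^ 2))
              * (m / Real.sqrt (k ^ 2 + m ^ 2)) := by
          rw [hv1, hv2, ← mul_pow, Real.sqrt_sq (by positivity)]
        have hcosθ : Real.cos (θ k) = v k * vD k
            + (m / Real.sqrt (Real.sin k ^ 2 + m ^ 2 * Real.cos k ^ 2))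
              * (m / Real.sqrt (k ^ 2 + m ^ 2)) := by
          simp only [θ]
          rw [Real.cos_sub, Real.cos_arctan, Real.cos_arctan, Real.sin_arctan, Real.sin_arctan,
            hA, hB]
          simp only [v, vD]
          field_simp
          ring
        simp only [β]
        rw [hsqrt, hcosθ]
        ring
      have hd : ∀ x : ℝ, HasDerivAt θ
          ((1 / (1 + (x / m) ^ 2)) * (1 / m)
            - (1 / (1 + (s * Real.sin x / m) ^ 2)) * (s * Real.cos x / m)) x := by
        intro x
        have h1 : HasDerivAt (fun y : ℝ => y / m) (1 / m) x := by
          simpa using (hasDerivAt_id x).div_const m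
        have h2 := (Real.hasDerivAt_arctan (x / m)).comp x h1
        have h3 : HasDerivAt (fun y : ℝ => s * Real.sin y / m) (s * Real.cos x / m) x := by
          simpa [mul_div_assoc] using ((Real.hasDerivAt_sin x).const_mul s).div_const m
        have h4 := (Real.hasDerivAt_arctan (s * Real.sin x / m)).comp x h3
        exact h2.sub h4
      have hθmono : MonotoneOn θ (Set.Ico 0 π) := by
        apply monotoneOn_of_deriv_nonneg (convex_Ico 0 π)
        · exact fun x _ => (hd x).differentiableAt.continuousAt.continuousWithinAt
        · intro x _
          exact (hd x).differentiableAt.differentiableWithinAt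
        · intro x hx
          rw [interior_Ico] at hx
          rw [(hd x).deriv]
          have hF := aux_F hs0 hs1 hx.1.le hx.2
          have e1 : (1 / (1 + (x / m) ^ 2)) * (1 / m) = m / (m ^ 2 + x ^ 2) := by
            field_simp
          have e2 : (1 / (1 + (s * Real.sin x / m) ^ 2)) * (s * Real.cos x / m)
              = (m * (s * Real.cos x)) / (m ^ 2 + (s * Real.sin x) ^ 2) := by
            field_simp
          rw [e1, e2, sub_nonneg, div_le_div_iff₀ (by positivity) (by positivity),
            show (m:ℝ) ^ 2 = 1 - s ^ 2 by linarith]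
          nlinarith [mul_le_mul_of_nonneg_left hF hmpos.le]
      have hθ0 : ∀ k ∈ Set.Ico (0:ℝ) π, 0 ≤ θ k := by
        intro k hk
        have hsin : 0 ≤ Real.sin k := Real.sin_nonneg_of_nonneg_of_le_pi hk.1 hk.2.le
        have hle : s * Real.sin k ≤ k := by nlinarith [Real.sin_le hk.1]
        have hle2 : s * Real.sin k / m ≤ k / m := by gcongr
        have := Real.arctan_strictMono.monotone hle2
        simp only [θ]
        linarith
      have hθpi : ∀ k ∈ Set.Ico (0:ℝ) π, θ k ≤ π := by
        intro k hk
        have hsin : 0 ≤ Real.sin k := Real.sin_nonneg_of_nonneg_of_le_pi hk.1 hk.2.le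
        have h1 : Real.arctan (k / m) < π / 2 := Real.arctan_lt_pi_div_two _
        have h2 : 0 ≤ Real.arctan (s * Real.sin k / m) := by
          rw [← Real.arctan_zero]
          exact Real.arctan_strictMono.monotone
            (div_nonneg (mul_nonneg hs0 hsin) hmpos.le)
        simp only [θ]
        linarith [Real.pi_pos]
      intro a ha b hb hab
      rw [hβθ a, hβθ b]
      have hc := Real.cos_le_cos_of_nonneg_of_le_pi (hθ0 a ha) (hθpi b hb)
        (hθmono ha hb hab)
      linarith
end

section
/- For m ∈ [0,1] and |k| ≤ π, the automaton dispersion ω(k,m) = arccos(√(1−m²) cos k) and the Dirac dispersion ω_D(k,m) = √(k²+m²) agree to second order at (k,m) = (0,0): ω(k,m) = ω_D(k,m)(1 + O((k²+m²))) as (k,m) → (0,0); in particular ω(k,m)/ω_D(k,m) → 1 as (k,m) → (0,0) along any path with (k,m) ≠ (0,0). -/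
open Real

lemma arccos_anti {x y : ℝ} (h : x ≤ y) : Real.arccos y ≤ Real.arccos x :=
  sub_le_sub_left (Real.monotone_arcsin h) _

lemma sqrt_one_sub_bounds {m : ℝ} (hm : m^2 ≤ 1) :
    1 - m^2/2 - m^4/2 ≤ Real.sqrt (1 - m^2) ∧ Real.sqrt (1 - m^2) ≤ 1 - m^2/2 := by
  have h0 : (0:ℝ) ≤ 1 - m^2 := by linarith
  have hs := Real.sq_sqrt h0
  have hsn := Real.sqrt_nonneg (1 - m^2)
  set s := Real.sqrt (1 - m^2)
  constructor
  · nlinarith [sq_nonneg (s - (1 - m^2/2 - m^4/2)), sq_nonneg m, sq_nonneg (m^2), sq_nonneg (m^3)]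
  · nlinarith [sq_nonneg (s - (1 - m^2/2))]

lemma sin_lb {x : ℝ} (h1 : 0 < x) (h2 : x ≤ 1/5) : x * (99/100) ≤ Real.sin x := by
  have h3 := Real.sin_gt_sub_cube h1
  have h4 : x*x ≤ (1/5)*(1/5) := mul_le_mul h2 h2 h1.le (by norm_num)
  nlinarith [mul_le_mul_of_nonneg_right h4 h1.le]

set_option maxHeartbeats 4000000 in
lemma key (k m : ℝ) (h : Real.sqrt (k^2+m^2) ≤ 1/10) :
    |Real.arccos (Real.sqrt (1 - m^2) * Real.cos k) - Real.sqrt (k^2+m^2)|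
      ≤ 20 * (k^2+m^2) * Real.sqrt (k^2+m^2) := by
  obtain ⟨r, hrdef⟩ : ∃ r, Real.sqrt (k^2+m^2) = r := ⟨_, rfl⟩
  rw [hrdef] at h ⊢
  have hrn : 0 ≤ r := hrdef ▸ Real.sqrt_nonneg _
  have hr2 : r^2 = k^2 + m^2 := hrdef ▸ Real.sq_sqrt (by positivity)
  have hk2 : k^2 ≤ r^2 := by nlinarith
  have hm2 : m^2 ≤ r^2 := by nlinarith
  have hr01 : r^2 ≤ 1/100 := by nlinarith
  have hm1 : m^2 ≤ 1 := by nlinarith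
  have hk1 : |k| ≤ 1 := by
    rw [abs_le]; constructor <;> nlinarith [abs_nonneg k, sq_abs k]
  have hs := sqrt_one_sub_bounds hm1
  obtain ⟨s, hsdef⟩ : ∃ s, Real.sqrt (1 - m^2) = s := ⟨_, rfl⟩
  rw [hsdef] at hs ⊢
  have hsn : 0 ≤ s := hsdef ▸ Real.sqrt_nonneg _
  have hck := Real.cos_bound hk1
  have hcr := Real.cos_bound (x := r) (by rw [abs_of_nonneg hrn]; linarith)
  have hk4 : |k|^4 ≤ r^4 := by
    have : |k|^2 ≤ r^2 := by rw [sq_abs]; exact hk2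
    nlinarith [abs_nonneg k, sq_nonneg (|k|^2)]
  -- E bound : |s * cos k - cos r| ≤ r^4
  have hr4 : (0:ℝ) ≤ r^4 := by positivity
  have heq : s * Real.cos k - Real.cos r =
      m^2*k^2/4 + (1-m^2/2)*(Real.cos k - (1 - k^2/2))
        + (s - (1-m^2/2))*Real.cos k - (Real.cos r - (1 - r^2/2)) := by
    linear_combination (1/2 : ℝ) * hr2
  have h1 : |m^2*k^2/4| ≤ r^4/4 := by
    rw [abs_of_nonneg (by positivity)]
    nlinarith [sq_nonneg k, sq_nonneg m]
  have h2 : |(1-m^2/2)*(Real.cos k - (1 - k^2/2))| ≤ r^4*(5/96) := by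
    rw [abs_mul]
    have ha : |1-m^2/2| ≤ 1 := by rw [abs_le]; constructor <;> nlinarith [sq_nonneg m]
    have hb : |Real.cos k - (1 - k^2/2)| ≤ r^4*(5/96) := hck.trans (by linarith)
    calc |1-m^2/2| * |Real.cos k - (1 - k^2/2)| ≤ 1 * (r^4*(5/96)) :=
          mul_le_mul ha hb (abs_nonneg _) one_pos.le
      _ = r^4*(5/96) := one_mul _
  have he1 : |s - (1 - m^2/2)| ≤ r^4/2 := by
    have hm4 : m^4 ≤ r^4 := by nlinarith [sq_nonneg m]
    rw [abs_le]; constructor <;> [linarith [hs.1]; linarith [hs.2]]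
  have h3 : |(s - (1-m^2/2))*Real.cos k| ≤ r^4/2 := by
    rw [abs_mul]
    calc |s - (1-m^2/2)| * |Real.cos k| ≤ (r^4/2) * 1 :=
          mul_le_mul he1 (Real.abs_cos_le_one k) (abs_nonneg _) (by positivity)
      _ = r^4/2 := mul_one _
  have h4 : |Real.cos r - (1 - r^2/2)| ≤ r^4*(5/96) := by simpa [abs_of_nonneg hrn] using hcr
  have hE : |s * Real.cos k - Real.cos r| ≤ r^4 := by
    rw [heq, abs_le]
    rw [abs_le] at h1 h2 h3 h4
    constructor <;> linarith
  rcases eq_or_lt_of_le hrn with h0 | hrpos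
  · -- r = 0 : k = 0, m = 0
    have hk0 : k = 0 := by nlinarith
    have hm0 : m = 0 := by nlinarith
    have hs1 : s = 1 := by rw [← hsdef, hm0]; simp
    rw [hs1, hk0, hm0, ← h0]
    simp [Real.arccos_one]
  · obtain ⟨t, ht⟩ : ∃ t, 20 * r^3 = t := ⟨_, rfl⟩
    have ht' : 20 * (k^2+m^2) * r = t := by rw [← ht, ← hr2]; ring
    have htpos : 0 < t := by rw [← ht]; positivity
    have htr : t ≤ r/2 := by
      have := mul_le_mul_of_nonneg_left hr01 (show (0:ℝ) ≤ 20*r by linarith)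
      rw [← ht]; nlinarith
    -- sin lower bounds
    have sin1 : (r + t/2) * (99/100) ≤ Real.sin (r + t/2) :=
      sin_lb (by linarith) (by linarith)
    have sin2 : (t/2) * (99/100) ≤ Real.sin (t/2) :=
      sin_lb (by linarith) (by linarith)
    have sin3 : (r - t/2) * (99/100) ≤ Real.sin (r - t/2) :=
      sin_lb (by linarith) (by linarith)
    -- cos r - cos (r+t) ≥ r^4
    have hc1 : Real.cos r - Real.cos (r + t) ≥ r^4 := by
      rw [Real.cos_sub_cos]
      have e1 : (r + (r+t))/2 = r + t/2 := by ring
      have e2 : (r - (r+t))/2 = -(t/2) := by ring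
      rw [e1, e2, Real.sin_neg]
      have hA : r*(99/100) ≤ Real.sin (r + t/2) := by nlinarith
      have key : 2*(r*(99/100))*((t/2)*(99/100)) ≤ -2 * Real.sin (r + t/2) * -Real.sin (t/2) := by
        have h1 : (r*(99/100))*((t/2)*(99/100)) ≤ Real.sin (r + t/2) * Real.sin (t/2) :=
          mul_le_mul hA sin2 (by positivity) (by linarith)
        nlinarith
      have hrt : r^4 ≤ 2*(r*(99/100))*((t/2)*(99/100)) := by
        rw [← ht]; nlinarith
      linarith
    -- cos (r-t) - cos r ≥ r^4
    have hc2 : Real.cos (r - t) - Real.cos r ≥ r^4 := by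
      rw [Real.cos_sub_cos]
      have e1 : (r - t + r)/2 = r - t/2 := by ring
      have e2 : (r - t - r)/2 = -(t/2) := by ring
      rw [e1, e2, Real.sin_neg]
      have hA : (r/2)*(99/100) ≤ Real.sin (r - t/2) := by nlinarith
      have key : 2*((r/2)*(99/100))*((t/2)*(99/100)) ≤ -2 * Real.sin (r - t/2) * -Real.sin (t/2) := by
        have h1 : ((r/2)*(99/100))*((t/2)*(99/100)) ≤ Real.sin (r - t/2) * Real.sin (t/2) :=
          mul_le_mul hA sin2 (by positivity) (by linarith)
        nlinarith
      have hrt : r^4 ≤ 2*((r/2)*(99/100))*((t/2)*(99/100)) := by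
        rw [← ht]; nlinarith
      linarith
    rw [abs_le] at hE
    have hlow : Real.cos (r + t) ≤ s * Real.cos k := by linarith
    have hhigh : s * Real.cos k ≤ Real.cos (r - t) := by linarith
    have hωlow : r - t ≤ Real.arccos (s * Real.cos k) := by
      have h5 := arccos_anti hhigh
      rwa [Real.arccos_cos (by linarith) (by linarith [Real.pi_gt_three])] at h5
    have hωhigh : Real.arccos (s * Real.cos k) ≤ r + t := by
      have h5 := arccos_anti hlow
      rwa [Real.arccos_cos (by linarith) (by linarith [Real.pi_gt_three])] at h5
    rw [abs_le]
    constructor <;> linarith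

theorem dispersion_relations_agree (ω ωD : ℝ × ℝ → ℝ)
    (hω : ∀ p : ℝ × ℝ, ω p = Real.arccos (Real.sqrt (1 - p.2 ^ 2) * Real.cos p.1))
    (hωD : ∀ p : ℝ × ℝ, ωD p = Real.sqrt (p.1 ^ 2 + p.2 ^ 2)) :
    (∃ C > (0:ℝ), ∃ δ > (0:ℝ), ∀ p : ℝ × ℝ, p.2 ∈ Set.Icc (0:ℝ) 1 → |p.1| ≤ Real.pi →
      0 < Real.sqrt (p.1 ^ 2 + p.2 ^ 2) → Real.sqrt (p.1 ^ 2 + p.2 ^ 2) < δ →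
      |ω p - ωD p| ≤ C * (p.1 ^ 2 + p.2 ^ 2) * ωD p) ∧
    (∀ ε > (0:ℝ), ∃ δ > (0:ℝ), ∀ p : ℝ × ℝ,
      0 < Real.sqrt (p.1 ^ 2 + p.2 ^ 2) → Real.sqrt (p.1 ^ 2 + p.2 ^ 2) < δ →
      |ω p / ωD p - 1| < ε) := by
  constructor
  · refine ⟨20, by norm_num, 1/10, by norm_num, ?_⟩
    intro p _ _ _ hlt
    rw [hω, hωD]
    exact key p.1 p.2 hlt.le
  · intro ε hε
    refine ⟨min (1/10) (Real.sqrt (ε/20)),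
      lt_min (by norm_num) (Real.sqrt_pos.mpr (by linarith)), ?_⟩
    intro p hpos hlt
    have h10 : Real.sqrt (p.1^2+p.2^2) ≤ 1/10 :=
      (lt_of_lt_of_le hlt (min_le_left _ _)).le
    have hk := key p.1 p.2 h10
    have hr2 : Real.sqrt (p.1^2+p.2^2)^2 = p.1^2+p.2^2 := Real.sq_sqrt (by positivity)
    rw [hω, hωD]
    have heq : |Real.arccos (Real.sqrt (1 - p.2 ^ 2) * Real.cos p.1) / Real.sqrt (p.1^2+p.2^2) - 1|
        = |Real.arccos (Real.sqrt (1 - p.2 ^ 2) * Real.cos p.1) - Real.sqrt (p.1^2+p.2^2)|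
          / Real.sqrt (p.1^2+p.2^2) := by
      rw [div_sub_one (ne_of_gt hpos), abs_div, abs_of_pos hpos]
    rw [heq]
    have hsq : Real.sqrt (p.1^2+p.2^2)^2 < ε/20 :=
      (Real.lt_sqrt (Real.sqrt_nonneg _)).mp (lt_of_lt_of_le hlt (min_le_right _ _))
    calc |Real.arccos (Real.sqrt (1 - p.2 ^ 2) * Real.cos p.1) - Real.sqrt (p.1^2+p.2^2)|
          / Real.sqrt (p.1^2+p.2^2)
        ≤ (20 * (p.1^2+p.2^2) * Real.sqrt (p.1^2+p.2^2)) / Real.sqrt (p.1^2+p.2^2) := by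
          gcongr
      _ = 20 * (p.1^2+p.2^2) := by field_simp
      _ = 20 * Real.sqrt (p.1^2+p.2^2)^2 := by rw [hr2]
      _ < ε := by linarith
end
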